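/- For every integer n ≥ 2 and every z ∈ ℂ with |z| > 1, the fractional-part set of the negated base is a translate of the original: F_{−z} = F_z − (n−1)z/(z² − 1) = { x − (n−1)z/(z²−1) : x ∈ F_z }. -/

import Mathlib

lemma summable_bound {w : ℂ} (hw : ‖w‖ < 1) (C : ℝ) (f : ℕ → ℂ) (hf : ∀ i, ‖f i‖ ≤ C) :
    Summable (fun i : ℕ => f i * w ^ (i + 1)) := by
  apply Summable.of_norm_bounded (g := fun i => C * ‖w‖ ^ (i + 1))
  · have h := (summable_geometric_of_lt_one (norm_nonneg w) hw).mul_left (C * ‖w‖)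
    simpa [pow_succ, mul_comm, mul_assoc, mul_left_comm] using h
  · intro i
    rw [norm_mul, norm_pow]
    exact mul_le_mul_of_nonneg_right (hf i) (by positivity)

lemma summable_digits {w : ℂ} (hw : ‖w‖ < 1) (n : ℕ) (d : ℕ → ℕ) (hd : ∀ i, d i < n) :
    Summable (fun i : ℕ => (d i : ℂ) * w ^ (i + 1)) := by
  apply summable_bound hw (n : ℝ)
  intro i
  rw [Complex.norm_natCast]
  exact_mod_cast (hd i).le

lemma const_sum {n : ℕ} {z : ℂ} (hz : 1 < ‖z‖) :
    (∑' i : ℕ, (if Even i then ((n : ℂ) - 1) * z⁻¹ ^ (i + 1) else 0))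
      = ((n : ℂ) - 1) * z / (z ^ 2 - 1) := by
  have hz0 : z ≠ 0 := by
    intro h; rw [h] at hz; simp at hz; linarith
  have hinv : ‖z⁻¹‖ < 1 := by
    rw [norm_inv, inv_lt_one_iff₀]
    right; exact hz
  have h21 : z ^ 2 - 1 ≠ 0 := by
    intro h
    have h1 : z ^ 2 = 1 := by linear_combination h
    have h2 : ‖z ^ 2‖ = 1 := by rw [h1]; simp
    rw [norm_pow] at h2
    nlinarith
  set f : ℕ → ℂ := fun i => if Even i then ((n : ℂ) - 1) * z⁻¹ ^ (i + 1) else 0 with hf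
  have hinj : Function.Injective (fun k : ℕ => 2 * k) := fun a b h => by dsimp at h; omega
  have hsupp : Function.support f ⊆ Set.range (fun k : ℕ => 2 * k) := by
    intro i hi
    rcases Nat.even_or_odd i with he | ho
    · obtain ⟨k, hk⟩ := he; exact ⟨k, by dsimp; omega⟩
    · exfalso; apply hi; simp [hf, Nat.not_even_iff_odd.mpr ho]
  rw [← Function.Injective.tsum_eq hinj hsupp]
  have hfk : ∀ k : ℕ, f ((fun k : ℕ => 2 * k) k) = (((n : ℂ) - 1) * z⁻¹) * (z⁻¹ ^ 2) ^ k := by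
    intro k
    simp only [hf, if_pos (even_two_mul k)]
    rw [pow_succ, pow_mul]
    ring
  rw [tsum_congr hfk, tsum_mul_left, tsum_geometric_of_norm_lt_one (by
    rw [norm_pow]; exact pow_lt_one₀ (norm_nonneg _) hinv (by norm_num))]
  have hd : 1 - z⁻¹ ^ 2 ≠ 0 := by
    intro h
    apply h21
    have h1 : z⁻¹ ^ 2 = 1 := by linear_combination -h
    field_simp at h1
    linear_combination -h1
  field_simp

lemma key (n : ℕ) (z : ℂ) (hz : 1 < ‖z‖) (a : ℕ → ℕ) (ha : ∀ i, a i < n) :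
    (∑' i : ℕ, (((if Even i then n - 1 - a i else a i : ℕ)) : ℂ) * z⁻¹ ^ (i + 1))
      = (∑' i : ℕ, (a i : ℂ) * (-z)⁻¹ ^ (i + 1)) + ((n : ℂ) - 1) * z / (z ^ 2 - 1) := by
  have hinv : ‖z⁻¹‖ < 1 := by
    rw [norm_inv, inv_lt_one_iff₀]; right; exact hz
  have hninv : ‖(-z)⁻¹‖ < 1 := by rwa [inv_neg, norm_neg]
  have hS1 : Summable (fun i : ℕ => (a i : ℂ) * (-z)⁻¹ ^ (i + 1)) :=
    summable_digits hninv n a ha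
  have hS2 : Summable (fun i : ℕ => (if Even i then ((n : ℂ) - 1) else 0) * z⁻¹ ^ (i + 1)) := by
    apply summable_bound hinv ((n : ℝ) + 1)
    intro i
    by_cases h : Even i
    · simp only [if_pos h]
      exact le_trans (norm_sub_le _ _) (by simp)
    · simp only [if_neg h, norm_zero]; positivity
  have hpt : ∀ i : ℕ,
      (((if Even i then n - 1 - a i else a i : ℕ)) : ℂ) * z⁻¹ ^ (i + 1)
        = (a i : ℂ) * (-z)⁻¹ ^ (i + 1)
          + (if Even i then ((n : ℂ) - 1) else 0) * z⁻¹ ^ (i + 1) := by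
    intro i
    by_cases h : Even i
    · have hodd : Odd (i + 1) := Even.add_one h
      rw [if_pos h, if_pos h, inv_neg, hodd.neg_pow]
      have hcast : (((n - 1 - a i : ℕ)) : ℂ) = (n : ℂ) - 1 - (a i : ℂ) := by
        have hai := ha i
        rw [Nat.sub_sub, Nat.cast_sub (by omega : 1 + a i ≤ n)]
        push_cast; ring
      rw [hcast]; ring
    · have heven : Even (i + 1) := Odd.add_one (Nat.not_even_iff_odd.mp h)
      rw [if_neg h, if_neg h, inv_neg, heven.neg_pow]
      ring
  rw [tsum_congr hpt, Summable.tsum_add hS1 hS2]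
  congr 1
  rw [← const_sum (n := n) hz]
  apply tsum_congr
  intro i
  by_cases h : Even i <;> simp [h]


/-- The fractional-part set `F_z` for base `z` and digits `{0,…,n-1}`. -/
def Fset (n : ℕ) (z : ℂ) : Set ℂ :=
  { x | ∃ a : ℕ → ℕ, (∀ i, a i < n) ∧ x = ∑' i : ℕ, (a i : ℂ) * z⁻¹ ^ (i + 1) }

theorem stmt_6 (n : ℕ) (hn : 2 ≤ n) (z : ℂ) (hz : 1 < ‖z‖) :
    Fset n (-z) = (fun x => x - ((n : ℂ) - 1) * z / (z ^ 2 - 1)) '' Fset n z := by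
  ext x
  constructor
  · rintro ⟨a, ha, rfl⟩
    refine ⟨∑' i : ℕ, (((if Even i then n - 1 - a i else a i : ℕ)) : ℂ) * z⁻¹ ^ (i + 1),
      ⟨fun i => if Even i then n - 1 - a i else a i, fun i => by have := ha i; dsimp only; split <;> omega,
        rfl⟩, ?_⟩
    rw [key n z hz a ha]
    ring
  · rintro ⟨y, ⟨b, hb, rfl⟩, rfl⟩
    refine ⟨fun i => if Even i then n - 1 - b i else b i,
      fun i => by have := hb i; dsimp only; split <;> omega, ?_⟩
    have hkey := key n z hz (fun i => if Even i then n - 1 - b i else b i)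
      (fun i => by have := hb i; split <;> omega)
    have hdig : ∀ i : ℕ, (if Even i then n - 1 - (if Even i then n - 1 - b i else b i)
        else (if Even i then n - 1 - b i else b i)) = b i := by
      intro i; have := hb i; split <;> omega
    simp only [hdig] at hkey
    rw [hkey]
    ring
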